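/- Let H be the free group on two generators a, b, and let G = H ⋊ ℤ/2 be the semidirect product in which the nontrivial element of ℤ/2 acts on H by the automorphism exchanging the generators a and b. Then the normal closure in G of the element (a, 0) (the image of the generator a under the canonical inclusion of H into G) equals the canonical copy of H in G, i.e., the image of the inclusion H → G. -/

import Mathlib

/-- Let `H` be the free group on two generators `a = of false`, `b = of true`, and let
`G = H ⋊ ℤ/2` where the nontrivial element of `ℤ/2` acts by exchanging the two generators.
Then the normal closure in `G` of the image of `a` under the canonical inclusion `H → G`
equals the canonical copy of `H` in `G`. -/
theorem stmt4 (φ : Multiplicative (ZMod 2) →* MulAut (FreeGroup Bool))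
    (hφ : φ (Multiplicative.ofAdd 1) =
      (FreeGroup.freeGroupCongr (Equiv.swap false true) : MulAut (FreeGroup Bool))) :
    Subgroup.normalClosure
        {(SemidirectProduct.inl (FreeGroup.of false) :
          FreeGroup Bool ⋊[φ] Multiplicative (ZMod 2))} =
      (SemidirectProduct.inl :
        FreeGroup Bool →* FreeGroup Bool ⋊[φ] Multiplicative (ZMod 2)).range := by
  apply le_antisymm
  · haveI : (SemidirectProduct.inl :
        FreeGroup Bool →* FreeGroup Bool ⋊[φ] Multiplicative (ZMod 2)).range.Normal := by
      rw [SemidirectProduct.range_inl_eq_ker_rightHom]; infer_instance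
    apply Subgroup.normalClosure_le_normal
    · rw [Set.singleton_subset_iff]
      exact ⟨FreeGroup.of false, rfl⟩
  · rintro x ⟨w, rfl⟩
    induction w using FreeGroup.induction_on with
    | C1 => simp only [map_one]; exact Subgroup.one_mem _
    | of b =>
      cases b with
      | false => exact Subgroup.subset_normalClosure rfl
      | true =>
        have h : (SemidirectProduct.inl (FreeGroup.of true) :
            FreeGroup Bool ⋊[φ] Multiplicative (ZMod 2)) =
            SemidirectProduct.inr (Multiplicative.ofAdd 1) *
              SemidirectProduct.inl (FreeGroup.of false) *
              (SemidirectProduct.inr (Multiplicative.ofAdd 1))⁻¹ := by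
          rw [← map_inv, ← SemidirectProduct.inl_aut, hφ]
          simp
        show SemidirectProduct.inl (FreeGroup.of true) ∈ _
        rw [h]
        apply Subgroup.Normal.conj_mem (Subgroup.normalClosure_normal)
        exact Subgroup.subset_normalClosure rfl
    | inv_of w hw => rw [map_inv]; exact Subgroup.inv_mem _ hw
    | mul w₁ w₂ h1 h2 => rw [map_mul]; exact Subgroup.mul_mem _ h1 h2
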